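/- For β ≤ 0 and θ > 0, the point x* = √(-2β)/θ is a globally asymptotically stable stationary point of the ODE x'(t) = -β - (θ²/2)x(t)² restricted to nonnegative initial conditions: if x(0) = x* then x(t) = x* for all t ≥ 0, and for every solution with x(0) = x₀ ≥ 0, x(t) → x* as t → ∞. -/

import Mathlib

open Set Filter Real

/-- Forward uniqueness: a solution that reaches an equilibrium point `e` stays at `e`. -/
lemma fluid_stay_at_equilibrium {β θ : ℝ} {x : ℝ → ℝ}
    (hx : ∀ t ∈ Set.Ici (0:ℝ),
      HasDerivWithinAt x (-β - θ ^ 2 / 2 * (x t) ^ 2) (Set.Ici 0) t)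
    {e : ℝ} (he : -β - θ ^ 2 / 2 * e ^ 2 = 0) {s : ℝ} (hs : 0 ≤ s) (hxs : x s = e) :
    ∀ t, s ≤ t → x t = e := by
  intro t ht
  have hcont : ContinuousOn x (Set.Ici 0) := fun u hu => (hx u hu).continuousWithinAt
  have hsub : Set.Icc s t ⊆ Set.Ici (0:ℝ) := fun u hu => le_trans hs hu.1
  have hcontst : ContinuousOn x (Set.Icc s t) := hcont.mono hsub
  obtain ⟨M, hM⟩ := isCompact_Icc.exists_bound_of_continuousOn hcontst
  set K : ℝ := θ ^ 2 / 2 * (M + |e|) with hK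
  have key := norm_le_gronwallBound_of_norm_deriv_right_le
      (f := fun u => x u - e) (f' := fun u => -β - θ ^ 2 / 2 * (x u) ^ 2)
      (δ := 0) (K := K) (ε := 0) (a := s) (b := t)
      (hcontst.sub continuousOn_const)
      (fun u hu => by
        have hu0 : u ∈ Set.Ici (0:ℝ) := le_trans hs hu.1
        exact (((hx u hu0).sub_const e).mono (Set.Ici_subset_Ici.mpr hu0.out)))
      (by simp [hxs])
      (fun u hu => by
        have hu0 : u ∈ Set.Icc s t := ⟨hu.1, hu.2.le⟩
        have hMu := hM u hu0
        have habs : |x u| ≤ M := by simpa using hMu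
        have h1 : -β - θ ^ 2 / 2 * (x u) ^ 2
            = -(θ ^ 2 / 2) * (x u + e) * (x u - e) := by nlinarith [he]
        show ‖-β - θ ^ 2 / 2 * x u ^ 2‖ ≤ K * ‖x u - e‖ + 0
        rw [h1]
        have hθ2 : (0:ℝ) ≤ θ ^ 2 / 2 := by positivity
        have h2 : |(-(θ ^ 2 / 2) * (x u + e) * (x u - e))|
            = θ ^ 2 / 2 * |x u + e| * |x u - e| := by
          rw [abs_mul, abs_mul]
          rw [abs_neg, abs_of_nonneg hθ2]
        have h3 : |x u + e| ≤ M + |e| := le_trans (abs_add_le _ _) (by gcongr)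
        have h4 : (0:ℝ) ≤ |x u - e| := abs_nonneg _
        calc ‖(-(θ ^ 2 / 2) * (x u + e) * (x u - e))‖
            = θ ^ 2 / 2 * |x u + e| * |x u - e| := h2
          _ ≤ θ ^ 2 / 2 * (M + |e|) * |x u - e| := by gcongr
          _ = K * ‖x u - e‖ + 0 := by rw [hK]; simp [Real.norm_eq_abs]
        )
      t ⟨ht, le_refl t⟩
  rw [gronwallBound_ε0_δ0] at key
  have h0 : |x t - e| ≤ 0 := by simpa [Real.norm_eq_abs] using key
  have h1 : |x t - e| = 0 := le_antisymm h0 (abs_nonneg _)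
  linarith [sub_eq_zero.mp (abs_eq_zero.mp h1)]

theorem fluid_xstar_stable (β θ : ℝ) (hβ : β ≤ 0) (hθ : 0 < θ) :
    ∀ x : ℝ → ℝ,
      (∀ t ∈ Set.Ici (0 : ℝ),
        HasDerivWithinAt x (-β - θ ^ 2 / 2 * (x t) ^ 2) (Set.Ici 0) t) →
      ((x 0 = Real.sqrt (-2 * β) / θ →
          ∀ t : ℝ, 0 ≤ t → x t = Real.sqrt (-2 * β) / θ) ∧
        (0 ≤ x 0 →
          Filter.Tendsto x Filter.atTop (nhds (Real.sqrt (-2 * β) / θ)))) := by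
  intro x hx
  set c : ℝ := Real.sqrt (-2 * β) / θ with hc
  have hθ0 : θ ≠ 0 := hθ.ne'
  have hc0 : 0 ≤ c := div_nonneg (Real.sqrt_nonneg _) hθ.le
  have hcsq : θ ^ 2 / 2 * c ^ 2 = -β := by
    rw [hc, div_pow, Real.sq_sqrt (by linarith)]
    field_simp
  have he : -β - θ ^ 2 / 2 * c ^ 2 = 0 := by linarith
  have he' : -β - θ ^ 2 / 2 * (-c) ^ 2 = 0 := by rw [neg_pow]; simpa using he
  have hcont : ContinuousOn x (Set.Ici 0) := fun u hu => (hx u hu).continuousWithinAt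
  constructor
  · intro h0 t ht
    exact fluid_stay_at_equilibrium hx he le_rfl h0 t ht
  · intro hx0
    by_cases hhit : ∃ s, 0 ≤ s ∧ x s = c
    · obtain ⟨s, hs, hxs⟩ := hhit
      have heq := fluid_stay_at_equilibrium hx he hs hxs
      refine Filter.Tendsto.congr' ?_ (tendsto_const_nhds (α := ℝ) (x := c))
      filter_upwards [Filter.eventually_ge_atTop s] with t ht
      exact (heq t ht).symm
    · push_neg at hhit
      have hne : ∀ s, 0 ≤ s → x s ≠ c := hhit
      rcases lt_or_gt_of_ne (hne 0 le_rfl) with hlt0 | hgt0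
      -- CASE x 0 < c
      · have hcpos : 0 < c := lt_of_le_of_lt hx0 hlt0
        have hlt : ∀ t, 0 ≤ t → x t < c := by
          intro t ht
          rcases lt_or_gt_of_ne (hne t ht) with h | h
          · exact h
          · exfalso
            have hmem : c ∈ Set.Icc (x 0) (x t) := ⟨hlt0.le, h.le⟩
            obtain ⟨u, hu, hxu⟩ := intermediate_value_Icc ht
              (hcont.mono (fun v hv => hv.1)) hmem
            exact hne u hu.1 hxu
        have hgtm : ∀ t, 0 ≤ t → -c < x t := by
          by_contra hcon
          push_neg at hcon
          obtain ⟨t, ht, hxt⟩ := hcon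
          set S := {u | u ∈ Set.Icc 0 t ∧ x u ≤ -c} with hS
          have hSne : S.Nonempty := ⟨t, ⟨⟨ht, le_rfl⟩, hxt⟩⟩
          have hSbdd : BddBelow S := ⟨0, fun u hu => hu.1.1⟩
          have hScl : IsClosed S := by
            have : S = Set.Icc 0 t ∩ x ⁻¹' Set.Iic (-c) := by
              ext u; simp [hS, Set.mem_Icc, and_comm]
            rw [this]
            exact (hcont.mono (fun v hv => hv.1)).preimage_isClosed_of_isClosed
              isClosed_Icc isClosed_Iic
          set s := sInf S with hsdef
          have hsS : s ∈ S := hScl.csInf_mem hSne hSbdd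
          have hs0 : 0 ≤ s := hsS.1.1
          have hpre : ∀ u, 0 ≤ u → u < s → -c < x u := by
            intro u hu hus
            by_contra hle; push_neg at hle
            have : u ∈ S := ⟨⟨hu, le_trans hus.le hsS.1.2⟩, hle⟩
            exact absurd (csInf_le hSbdd this) (not_le.mpr hus)
          have hmono : MonotoneOn x (Set.Icc 0 s) := by
            apply monotoneOn_of_hasDerivWithinAt_nonneg (convex_Icc 0 s)
              (f' := fun u => -β - θ ^ 2 / 2 * (x u) ^ 2)
              (hcont.mono (fun v hv => hv.1))
            · intro u hu
              rw [interior_Icc] at hu ⊢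
              exact (hx u hu.1.le).mono (fun v hv => hv.1.le)
            · intro u hu
              rw [interior_Icc] at hu
              have h1 := hpre u hu.1.le hu.2
              have h2 := hlt u hu.1.le
              have hθ2 : (0:ℝ) < θ ^ 2 / 2 := by positivity
              nlinarith [hcsq, mul_nonneg hθ2.le
                (mul_pos (sub_pos.mpr h2) (show (0:ℝ) < x u + c by linarith)).le]
          have hle : x 0 ≤ x s := hmono ⟨le_rfl, hs0⟩ ⟨hs0, le_rfl⟩ hs0
          linarith [hsS.2]
        have hmono : MonotoneOn x (Set.Ici 0) := by
          apply monotoneOn_of_hasDerivWithinAt_nonneg (convex_Ici 0)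
            (f' := fun u => -β - θ ^ 2 / 2 * (x u) ^ 2) hcont
          · intro u hu
            rw [interior_Ici] at hu ⊢
            exact (hx u (Set.mem_Ici.mpr hu.le)).mono (fun v hv => Set.mem_Ici.mpr (le_of_lt hv))
          · intro u hu
            rw [interior_Ici] at hu
            have h1 := hgtm u hu.le
            have h2 := hlt u hu.le
            have hθ2 : (0:ℝ) < θ ^ 2 / 2 := by positivity
            nlinarith [hcsq, mul_nonneg hθ2.le
              (mul_pos (sub_pos.mpr h2) (show (0:ℝ) < x u + c by linarith)).le]
        set y : ℝ → ℝ := fun t => x (max t 0) with hy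
        have hymono : Monotone y := fun a b hab =>
          hmono (Set.mem_Ici.mpr (le_max_right _ _)) (Set.mem_Ici.mpr (le_max_right _ _)) (max_le_max hab le_rfl)
        have hybdd : BddAbove (Set.range y) := by
          refine ⟨c, ?_⟩
          rintro _ ⟨t, rfl⟩
          exact (hlt _ (le_max_right _ _)).le
        have hytend := tendsto_atTop_ciSup hymono hybdd
        set L := ⨆ t, y t with hL
        have hLlec : L ≤ c := ciSup_le (fun t => (hlt _ (le_max_right _ _)).le)
        have hLge : x 0 ≤ L := by
          have := le_ciSup hybdd (0:ℝ)
          simpa [hy] using this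
        have hLc : L = c := by
          by_contra hne'
          have hLlt : L < c := lt_of_le_of_ne hLlec hne'
          set ε := θ ^ 2 / 2 * (c ^ 2 - L ^ 2) with hε
          have hL0 : 0 ≤ L := le_trans hx0 hLge
          have hεpos : 0 < ε := by
            have hsq : L ^ 2 < c ^ 2 := pow_lt_pow_left₀ hLlt hL0 two_ne_zero
            have hθ2 : (0:ℝ) < θ ^ 2 / 2 := by positivity
            exact mul_pos hθ2 (by linarith)
          have hxle : ∀ t, 0 ≤ t → x t ≤ L := by
            intro t ht
            have := le_ciSup hybdd t
            simpa [hy, max_eq_left ht] using this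
          have hmono2 : MonotoneOn (fun t => x t - ε * t) (Set.Ici 0) := by
            apply monotoneOn_of_hasDerivWithinAt_nonneg (convex_Ici 0)
              (f' := fun u => (-β - θ ^ 2 / 2 * (x u) ^ 2) - ε)
              (hcont.sub (continuous_const.mul continuous_id).continuousOn)
            · intro u hu
              rw [interior_Ici] at hu ⊢
              have hd : HasDerivAt (fun t : ℝ => ε * t) ε u := by
                simpa using (hasDerivAt_id u).const_mul ε
              exact ((hx u (Set.mem_Ici.mpr hu.le)).sub hd.hasDerivWithinAt).mono
                (fun v hv => Set.mem_Ici.mpr (le_of_lt hv))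
            · intro u hu
              rw [interior_Ici] at hu
              have h1 : x 0 ≤ x u := hmono Set.self_mem_Ici (Set.mem_Ici.mpr hu.le) hu.le
              have h2 := hxle u hu.le
              have h3 : (x u) ^ 2 ≤ L ^ 2 :=
                pow_le_pow_left₀ (by linarith) h2 2
              have hθ2 : (0:ℝ) < θ ^ 2 / 2 := by positivity
              simp only [hε]
              nlinarith [hcsq, mul_nonneg hθ2.le (sub_nonneg.mpr h3)]
          set T := (c - x 0) / ε with hT
          have hT0 : 0 ≤ T := div_nonneg (by linarith) hεpos.le
          have hkey : x 0 - ε * 0 ≤ x T - ε * T :=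
            hmono2 Set.self_mem_Ici hT0 hT0
          have hεT : ε * T = c - x 0 := by
            rw [hT]; field_simp
          have : c ≤ x T := by linarith [hkey, hεT]
          exact absurd (hlt T hT0) (not_lt.mpr this)
        rw [hLc] at hytend
        apply Filter.Tendsto.congr' _ hytend
        filter_upwards [Filter.eventually_ge_atTop (0:ℝ)] with t ht
        simp [hy, max_eq_left ht]
      -- CASE x 0 > c
      · have hgt : ∀ t, 0 ≤ t → c < x t := by
          intro t ht
          rcases lt_or_gt_of_ne (hne t ht) with h | h
          · exfalso
            have hmem : c ∈ Set.Icc (x t) (x 0) := ⟨h.le, hgt0.le⟩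
            obtain ⟨u, hu, hxu⟩ := intermediate_value_Icc' ht
              (hcont.mono (fun v hv => hv.1)) hmem
            exact hne u hu.1 hxu
          · exact h
        have hanti : AntitoneOn x (Set.Ici 0) := by
          apply antitoneOn_of_hasDerivWithinAt_nonpos (convex_Ici 0)
            (f' := fun u => -β - θ ^ 2 / 2 * (x u) ^ 2) hcont
          · intro u hu
            rw [interior_Ici] at hu ⊢
            exact (hx u (Set.mem_Ici.mpr hu.le)).mono (fun v hv => Set.mem_Ici.mpr (le_of_lt hv))
          · intro u hu
            rw [interior_Ici] at hu
            have h1 := hgt u hu.le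
            have hθ2 : (0:ℝ) < θ ^ 2 / 2 := by positivity
            nlinarith [hcsq, mul_nonneg hθ2.le
              (mul_pos (sub_pos.mpr h1) (show (0:ℝ) < x u + c by linarith)).le]
        set y : ℝ → ℝ := fun t => x (max t 0) with hy
        have hyanti : Antitone y := fun a b hab =>
          hanti (Set.mem_Ici.mpr (le_max_right _ _)) (Set.mem_Ici.mpr (le_max_right _ _)) (max_le_max hab le_rfl)
        have hybdd : BddBelow (Set.range y) := by
          refine ⟨c, ?_⟩
          rintro _ ⟨t, rfl⟩
          exact (hgt _ (le_max_right _ _)).le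
        have hytend := tendsto_atTop_ciInf hyanti hybdd
        set L := ⨅ t, y t with hL
        have hLgec : c ≤ L := le_ciInf (fun t => (hgt _ (le_max_right _ _)).le)
        have hLle : L ≤ x 0 := by
          have := ciInf_le hybdd (0:ℝ)
          simpa [hy] using this
        have hLc : L = c := by
          by_contra hne'
          have hLgt : c < L := lt_of_le_of_ne hLgec (Ne.symm hne')
          set ε := θ ^ 2 / 2 * (L ^ 2 - c ^ 2) with hε
          have hL0 : 0 ≤ L := le_trans hc0 hLgec
          have hεpos : 0 < ε := by
            have hsq : c ^ 2 < L ^ 2 := pow_lt_pow_left₀ hLgt hc0 two_ne_zero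
            have hθ2 : (0:ℝ) < θ ^ 2 / 2 := by positivity
            exact mul_pos hθ2 (by linarith)
          have hxge : ∀ t, 0 ≤ t → L ≤ x t := by
            intro t ht
            have := ciInf_le hybdd t
            simpa [hy, max_eq_left ht] using this
          have hanti2 : AntitoneOn (fun t => x t + ε * t) (Set.Ici 0) := by
            apply antitoneOn_of_hasDerivWithinAt_nonpos (convex_Ici 0)
              (f' := fun u => (-β - θ ^ 2 / 2 * (x u) ^ 2) + ε)
              (hcont.add (continuous_const.mul continuous_id).continuousOn)
            · intro u hu
              rw [interior_Ici] at hu ⊢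
              have hd : HasDerivAt (fun t : ℝ => ε * t) ε u := by
                simpa using (hasDerivAt_id u).const_mul ε
              exact ((hx u (Set.mem_Ici.mpr hu.le)).add hd.hasDerivWithinAt).mono
                (fun v hv => Set.mem_Ici.mpr (le_of_lt hv))
            · intro u hu
              rw [interior_Ici] at hu
              have h1 := hxge u hu.le
              have h3 : L ^ 2 ≤ (x u) ^ 2 :=
                pow_le_pow_left₀ hL0 h1 2
              have hθ2 : (0:ℝ) < θ ^ 2 / 2 := by positivity
              simp only [hε]
              nlinarith [hcsq, mul_nonneg hθ2.le (sub_nonneg.mpr h3)]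
          set T := (x 0 - c) / ε with hT
          have hT0 : 0 ≤ T := div_nonneg (by linarith) hεpos.le
          have hkey : x T + ε * T ≤ x 0 + ε * 0 :=
            hanti2 Set.self_mem_Ici hT0 hT0
          have hεT : ε * T = x 0 - c := by
            rw [hT]; field_simp
          have : x T ≤ c := by linarith [hkey, hεT]
          exact absurd (hgt T hT0) (not_lt.mpr this)
        rw [hLc] at hytend
        apply Filter.Tendsto.congr' _ hytend
        filter_upwards [Filter.eventually_ge_atTop (0:ℝ)] with t ht
        simp [hy, max_eq_left ht]
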